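/- For every m ≥ 4, every m×n binary 2-covering array satisfies n ≤ binom(m−1, ⌊m/2⌋−1); that is, the maximal degree of a binary 2-covering array of size m satisfies CAN̄(2,m,2) ≤ binom(m−1, ⌊m/2⌋−1). -/

import Mathlib

/-- An `m × n` matrix over `B_q = {0,…,q-1}` is a `t`-covering array if for any `t`
distinct column indices and any `q`-ary vector of length `t`, some row realizes it. -/
def IsCoveringArray (m n q t : ℕ) (C : Fin m → Fin n → Fin q) : Prop :=
  ∀ cols : Fin t → Fin n, Function.Injective cols →
    ∀ v : Fin t → Fin q, ∃ r : Fin m, ∀ j : Fin t, C r (cols j) = v j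

/-- `CAN t n q` : the minimal size `m` for which a `CA(m; t, n, q)` exists. -/
noncomputable def CAN (t n q : ℕ) : ℕ :=
  sInf { m | ∃ C : Fin m → Fin n → Fin q, IsCoveringArray m n q t C }

/-- The weight of the `i`-th column: the number of nonzero entries. -/
def colWt {m n q : ℕ} (C : Fin m → Fin n → Fin q) (i : Fin n) : ℕ :=
  (Finset.univ.filter fun r : Fin m => (C r i : ℕ) ≠ 0).card

/-- The support of the `i`-th column: the set of coordinates where it is nonzero. -/
def colSupp {m n q : ℕ} (C : Fin m → Fin n → Fin q) (i : Fin n) : Finset (Fin m) :=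
  Finset.univ.filter fun r : Fin m => (C r i : ℕ) ≠ 0

/-- The Hamming distance between the `i`-th and `j`-th columns. -/
def colDist {m n q : ℕ} (C : Fin m → Fin n → Fin q) (i j : Fin n) : ℕ :=
  (Finset.univ.filter fun r : Fin m => C r i ≠ C r j).card

/-- Two arrays are equivalent if one is obtained from the other by a row permutation,
a column permutation, and value permutations applied columnwise. -/
def CAEquiv {m n q : ℕ} (C C' : Fin m → Fin n → Fin q) : Prop :=
  ∃ (σ : Equiv.Perm (Fin m)) (τ : Equiv.Perm (Fin n)) (f : Fin n → Equiv.Perm (Fin q)),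
    ∀ r i, C' r i = f i (C (σ r) (τ i))

/-- The standard maximal binary 2-covering array of size `m` : an
`m × (m-1).choose (m/2 - 1)` binary matrix whose first row is all ones and whose columns,
restricted to the remaining `m - 1` rows, are exactly (i.e. are pairwise distinct) the binary
vectors of length `m-1` with `m/2 - 1` ones. -/
def IsStandardMaxArray (m : ℕ) (S : Fin m → Fin ((m-1).choose (m/2 - 1)) → Fin 2) : Prop :=
  (∀ (r : Fin m) (i), (r : ℕ) = 0 → S r i = 1) ∧
  (Function.Injective fun i => fun r => S r i) ∧
  (∀ i, (Finset.univ.filter fun r : Fin m => (r : ℕ) ≠ 0 ∧ S r i = 1).card = m/2 - 1)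

attribute [-instance] instDecidableEqFin
open Finset
open scoped FinsetFamily

lemma exists_bottom {β : Type*} [LinearOrder β] (S : Finset β) :
    ∀ s : ℕ, s ≤ #S →
    ∃ T, T ⊆ S ∧ #T = s ∧ ∀ x ∈ T, ∀ y ∈ S, y ∉ T → x < y := by
  intro s
  induction s with
  | zero => intro _; exact ⟨∅, empty_subset _, card_empty, by simp⟩
  | succ s ih =>
    intro hs
    obtain ⟨T, hTS, hTc, hTlt⟩ := ih (by omega)
    have hne : (S \ T).Nonempty := by
      rw [← card_pos, card_sdiff_of_subset hTS]
      omega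
    set y0 := (S \ T).min' hne with hy0
    have hy0m : y0 ∈ S \ T := min'_mem _ _
    have hy0S : y0 ∈ S := (mem_sdiff.1 hy0m).1
    have hy0T : y0 ∉ T := (mem_sdiff.1 hy0m).2
    refine ⟨insert y0 T, ?_, ?_, ?_⟩
    · exact insert_subset hy0S hTS
    · rw [card_insert_of_notMem hy0T, hTc]
    · intro x hx y hy hyT
      have hyT' : y ∉ T := fun h => hyT (mem_insert_of_mem h)
      have hyy0 : y ≠ y0 := fun h => hyT (h ▸ mem_insert_self _ _)
      rcases mem_insert.1 hx with rfl | hxT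
      · exact lt_of_le_of_ne (min'_le _ _ (mem_sdiff.2 ⟨hy, hyT'⟩)) (Ne.symm hyy0)
      · exact hTlt x hxT y hy hyT'

lemma restricted_llym {α : Type*} [DecidableEq α] {S : Finset α} {K : ℕ} (hK : K ≠ 0)
    {𝒞 : Finset (Finset α)} (hsub : ∀ A ∈ 𝒞, A ⊆ S) (hsized : ∀ A ∈ 𝒞, #A = K)
    (hS : #S = 2 * K - 1) : #𝒞 ≤ #(∂ 𝒞) := by
  have hsz : (𝒞 : Set (Finset α)).Sized K := fun A hA => hsized A hA
  have hshsz : ((∂ 𝒞 : Finset (Finset α)) : Set (Finset α)).Sized (K - 1) := hsz.shadow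
  have key : #𝒞 * K ≤ #(∂ 𝒞) * K := by
    calc #𝒞 * K = ∑ A ∈ 𝒞, K := by rw [Finset.sum_const, smul_eq_mul, mul_comm]
    _ ≤ ∑ A ∈ 𝒞, #((∂ 𝒞).filter (· ⊆ A)) := by
        refine Finset.sum_le_sum fun A hA => ?_
        have himg : (A.image A.erase) ⊆ (∂ 𝒞).filter (· ⊆ A) := by
          intro B hB
          simp only [mem_image] at hB
          obtain ⟨x, hx, rfl⟩ := hB
          exact mem_filter.2 ⟨erase_mem_shadow hA hx, erase_subset _ _⟩
        have : #(A.image A.erase) = K := by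
          rw [card_image_of_injOn A.erase_injOn, hsized A hA]
        calc K = #(A.image A.erase) := this.symm
        _ ≤ _ := card_le_card himg
    _ = ∑ B ∈ ∂ 𝒞, #(𝒞.filter fun A => B ⊆ A) := by
        simp_rw [card_filter]
        rw [Finset.sum_comm]
    _ ≤ ∑ B ∈ ∂ 𝒞, K := by
        refine Finset.sum_le_sum fun B hB => ?_
        have hBcard : #B = K - 1 := hshsz hB
        have hBS : B ⊆ S := by
          obtain ⟨A, hA, hBA⟩ := exists_subset_of_mem_shadow hB
          exact hBA.trans (hsub A hA)
        have hsub2 : 𝒞.filter (fun A => B ⊆ A) ⊆ (S \ B).image (fun x => insert x B) := by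
          intro A hA
          rw [mem_filter] at hA
          obtain ⟨hA𝒞, hBA⟩ := hA
          have hcA : #(A \ B) = 1 := by
            rw [card_sdiff_of_subset hBA, hsized A hA𝒞, hBcard]
            omega
          obtain ⟨x, hx⟩ := card_eq_one.1 hcA
          have hxA : x ∈ A := by
            have : x ∈ A \ B := hx ▸ mem_singleton_self x
            exact (mem_sdiff.1 this).1
          have hxB : x ∉ B := by
            have : x ∈ A \ B := hx ▸ mem_singleton_self x
            exact (mem_sdiff.1 this).2
          have : A = insert x B := by
            apply Finset.Subset.antisymm
            · intro a ha
              by_cases haB : a ∈ B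
              · exact mem_insert_of_mem haB
              · have : a ∈ A \ B := mem_sdiff.2 ⟨ha, haB⟩
                rw [hx, mem_singleton] at this
                exact this ▸ mem_insert_self _ _
            · intro a ha
              rcases mem_insert.1 ha with rfl | haB
              · exact hxA
              · exact hBA haB
          refine mem_image.2 ⟨x, mem_sdiff.2 ⟨hsub A hA𝒞 hxA, hxB⟩, this.symm⟩
        calc #(𝒞.filter fun A => B ⊆ A) ≤ #((S \ B).image (fun x => insert x B)) :=
              card_le_card hsub2
        _ ≤ #(S \ B) := card_image_le
        _ = K := by rw [card_sdiff_of_subset hBS, hS, hBcard]; omega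
    _ = #(∂ 𝒞) * K := by rw [Finset.sum_const, smul_eq_mul, mul_comm]
  exact Nat.le_of_mul_le_mul_right key (Nat.pos_of_ne_zero hK)

lemma middle_shadow {K : ℕ} (hK : K ≠ 0) (ℬ : Finset (Finset (Fin (2 * K))))
    (hsized : ∀ A ∈ ℬ, #A = K) (hfree : ∀ A ∈ ℬ, Aᶜ ∉ ℬ) :
    (#ℬ) ≤ #(∂ ℬ) := by
  classical
  have hcard2 : (2 * K).choose K = 2 * (2 * K - 1).choose K := by
    have h1 : (2 * K) = (2 * K - 1) + 1 := by omega
    have h2 : K = (K - 1) + 1 := by omega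
    have h3 : (2 * K - 1).choose (K - 1) = (2 * K - 1).choose K := by
      have := Nat.choose_symm (n := 2 * K - 1) (k := K) (by omega)
      rw [show 2 * K - 1 - K = K - 1 by omega] at this
      exact this
    calc (2 * K).choose K = ((2 * K - 1) + 1).choose ((K - 1) + 1) := by rw [← h1, ← h2]
    _ = (2 * K - 1).choose (K - 1) + (2 * K - 1).choose ((K - 1) + 1) := Nat.choose_succ_succ _ _
    _ = 2 * (2 * K - 1).choose K := by rw [h3, ← h2]; omega
  -- ℬ is at most half of the middle layer
  have hsubP : ℬ ⊆ (univ : Finset (Fin (2 * K))).powersetCard K := fun A hA =>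
    mem_powersetCard.2 ⟨subset_univ _, hsized A hA⟩
  have hsubPc : ℬᶜˢ ⊆ (univ : Finset (Fin (2 * K))).powersetCard K := by
    intro A hA
    rw [mem_compls] at hA
    refine mem_powersetCard.2 ⟨subset_univ _, ?_⟩
    have := hsized _ hA
    have hc : #(Aᶜ) = Fintype.card (Fin (2 * K)) - #A := card_compl A
    rw [Fintype.card_fin] at hc
    omega
  have hdisj : Disjoint ℬ ℬᶜˢ := by
    rw [disjoint_left]
    intro A hA hA'
    rw [mem_compls] at hA'
    exact hfree _ hA' (by simpa using hA)
  have hhalf : #ℬ ≤ (2 * K - 1).choose K := by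
    have := card_le_card (union_subset hsubP hsubPc)
    rw [card_union_of_disjoint hdisj, card_compls, card_powersetCard, card_univ,
      Fintype.card_fin, hcard2] at this
    omega
  -- the "bottom s" initial segment
  set s := #ℬ with hs
  have hsP : s ≤ #((univ : Finset (Fin (2 * K))).powersetCard K) := by
    exact card_le_card hsubP
  obtain ⟨T, hTsub, hTcard, hTlt⟩ := exists_bottom
    (((univ : Finset (Fin (2 * K))).powersetCard K).image toColex) s
    (by rwa [card_image_of_injective _ toColex.injective])
  set P := (univ : Finset (Fin (2 * K))).powersetCard K with hP
  set 𝒞 := P.filter (fun A => toColex A ∈ T) with h𝒞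
  have h𝒞img : 𝒞.image toColex = T := by
    apply Finset.Subset.antisymm
    · intro y hy
      obtain ⟨A, hA, rfl⟩ := mem_image.1 hy
      exact (mem_filter.1 hA).2
    · intro y hy
      obtain ⟨A, hA, rfl⟩ := mem_image.1 (hTsub hy)
      exact mem_image.2 ⟨A, mem_filter.2 ⟨hA, hy⟩, rfl⟩
  have h𝒞card : #𝒞 = s := by
    rw [← hTcard, ← h𝒞img, card_image_of_injective _ toColex.injective]
  have h𝒞sized : (𝒞 : Set (Finset (Fin (2 * K)))).Sized K := fun A hA =>
    (mem_powersetCard.1 (mem_filter.1 hA).1).2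
  have h𝒞init : Colex.IsInitSeg 𝒞 K := by
    refine ⟨h𝒞sized, ?_⟩
    rintro A B hA ⟨hBA, hBcard⟩
    have hBP : B ∈ P := mem_powersetCard.2 ⟨subset_univ _, hBcard⟩
    by_contra hB𝒞
    have hBT : toColex B ∉ T := fun h => hB𝒞 (mem_filter.2 ⟨hBP, h⟩)
    have := hTlt (toColex A) (mem_filter.1 hA).2 (toColex B)
      (mem_image.2 ⟨B, hBP, rfl⟩) hBT
    exact absurd hBA (not_lt.2 this.le)
  -- 𝒞 avoids the top element
  set top : Fin (2 * K) := ⟨2 * K - 1, by omega⟩ with htop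
  set S : Finset (Fin (2 * K)) := univ.erase top with hSdef
  have hScard : #S = 2 * K - 1 := by
    rw [hSdef, card_erase_of_mem (mem_univ _), card_univ, Fintype.card_fin]
  have h𝒞S : ∀ A ∈ 𝒞, A ⊆ S := by
    intro A hA
    by_contra hAS
    have htopA : top ∈ A := by
      by_contra htopA
      exact hAS fun x hx => mem_erase.2 ⟨fun h => htopA (h ▸ hx), mem_univ _⟩
    -- every K-set avoiding top is colex-below A, hence in 𝒞
    have hDsub : S.powersetCard K ⊆ 𝒞 := by
      intro v hv
      obtain ⟨hvS, hvcard⟩ := mem_powersetCard.1 hv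
      have hvtop : top ∉ v := fun h => (mem_erase.1 (hvS h)).1 rfl
      have hvA : v ≠ A := fun h => hvtop (h ▸ htopA)
      have hlt : toColex v < toColex A := by
        rw [Colex.toColex_lt_toColex]
        refine ⟨hvA, fun a ha haA => ⟨top, htopA, hvtop, ?_⟩⟩
        have : (a : ℕ) ≤ 2 * K - 1 := by omega
        exact Fin.le_def.2 this
      exact h𝒞init.2 hA ⟨hlt, hvcard⟩
    have hDcard : #(S.powersetCard K) = (2 * K - 1).choose K := by
      rw [card_powersetCard, hScard]
    have hA𝒞 : A ∈ 𝒞 := hA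
    have hAD : A ∉ S.powersetCard K := by
      intro h
      exact (mem_erase.1 ((mem_powersetCard.1 h).1 htopA)).1 rfl
    have : (2 * K - 1).choose K + 1 ≤ #𝒞 := by
      have h1 : S.powersetCard K ⊆ 𝒞.erase A := by
        intro v hv
        exact mem_erase.2 ⟨fun h => hAD (h ▸ hv), hDsub hv⟩
      have := card_le_card h1
      rw [hDcard] at this
      have h2 : #(𝒞.erase A) = #𝒞 - 1 := card_erase_of_mem hA𝒞
      have h3 : 1 ≤ #𝒞 := card_pos.2 ⟨A, hA𝒞⟩
      omega
    rw [h𝒞card] at this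
    omega
  -- Kruskal–Katona
  have hKK : #(∂ 𝒞) ≤ #(∂ ℬ) := by
    refine Finset.kruskal_katona (fun A hA => hsized A hA) ?_ h𝒞init
    rw [h𝒞card]
  have hllym : #𝒞 ≤ #(∂ 𝒞) :=
    restricted_llym hK (fun A hA => h𝒞S A hA) (fun A hA => h𝒞sized hA) hScard
  omega

lemma up_llym {α : Type*} [Fintype α] [DecidableEq α] {k : ℕ} (𝒜 : Finset (Finset α))
    (hsized : (𝒜 : Set (Finset α)).Sized k) (h2k : 2 * k < Fintype.card α) :
    (#𝒜) ≤ #(∂⁺ 𝒜) := by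
  have hcsized : ((𝒜ᶜˢ : Finset (Finset α)) : Set (Finset α)).Sized (Fintype.card α - k) := by
    intro A hA
    rw [mem_coe, mem_compls] at hA
    have := hsized hA
    have hc : #A = Fintype.card α - #(Aᶜ) := by
      have := card_compl A
      have h2 : #(Aᶜ) ≤ Fintype.card α := card_le_univ _
      have h3 : #A ≤ Fintype.card α := card_le_univ _
      omega
    rw [hc, this]
  have hlym := card_mul_le_card_shadow_mul hcsized
  rw [card_compls, shadow_compls, card_compls] at hlym
  have hfac : Fintype.card α - (Fintype.card α - k) + 1 = k + 1 := by omega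
  rw [hfac] at hlym
  have h1 : #𝒜 * (k + 1) ≤ #𝒜 * (Fintype.card α - k) :=
    Nat.mul_le_mul_left _ (by omega)
  have := le_trans h1 hlym
  exact Nat.le_of_mul_le_mul_right this (by omega)

lemma up_middle {K : ℕ} (hK : K ≠ 0) (𝒜 : Finset (Finset (Fin (2 * K))))
    (hsized : ∀ A ∈ 𝒜, #A = K) (hfree : ∀ A ∈ 𝒜, Aᶜ ∉ 𝒜) :
    (#𝒜) ≤ #(∂⁺ 𝒜) := by
  have h1 : #(∂⁺ 𝒜) = #(∂ (𝒜ᶜˢ)) := by rw [shadow_compls, card_compls]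
  rw [h1, ← card_compls (s := 𝒜)]
  refine middle_shadow hK _ ?_ ?_
  · intro A hA
    rw [mem_compls] at hA
    have := hsized _ hA
    have hc := card_compl A
    rw [Fintype.card_fin] at hc
    omega
  · intro A hA hA'
    rw [mem_compls] at hA hA'
    rw [compl_compl] at hA'
    exact hfree _ hA' hA

-- combined: push-up card inequality at level k, 2k ≤ N
lemma up_card {N k : ℕ} (hk : 2 * k ≤ N) (hk0 : k ≠ 0) (𝒜 : Finset (Finset (Fin N)))
    (hsized : ∀ A ∈ 𝒜, #A = k) (hfree : ∀ A ∈ 𝒜, Aᶜ ∉ 𝒜) :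
    (#𝒜) ≤ #(∂⁺ 𝒜) := by
  rcases lt_or_eq_of_le hk with hlt | heq
  · exact up_llym 𝒜 (fun A hA => hsized A hA) (by rwa [Fintype.card_fin])
  · subst heq
    exact up_middle hk0 𝒜 hsized hfree

lemma step_up {N : ℕ} (k : ℕ) (hk : 2 * k ≤ N) (𝒜 : Finset (Finset (Fin N)))
    (hanti : IsAntichain (· ⊆ ·) (𝒜 : Set (Finset (Fin N))))
    (hint : ∀ A ∈ 𝒜, ∀ B ∈ 𝒜, (A ∩ B).Nonempty)
    (hmin : ∀ A ∈ 𝒜, k ≤ #A) :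
    ∃ 𝒜' : Finset (Finset (Fin N)),
      IsAntichain (· ⊆ ·) (𝒜' : Set (Finset (Fin N))) ∧
      (∀ A ∈ 𝒜', ∀ B ∈ 𝒜', (A ∩ B).Nonempty) ∧
      (∀ A ∈ 𝒜', k + 1 ≤ #A) ∧ #𝒜 ≤ #𝒜' := by
  classical
  set 𝒮 := 𝒜.filter (fun A => #A = k) with h𝒮
  set 𝒜p := 𝒜.filter (fun A => ¬ #A = k) with h𝒜p
  -- every member of ∂⁺𝒮 strictly contains a member of 𝒜 and has card k+1
  have hsh : ∀ B ∈ ∂⁺ 𝒮, #B = k + 1 ∧ ∃ A ∈ 𝒜, A ⊆ B ∧ A ≠ B := by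
    intro B hB
    rw [mem_upShadow_iff] at hB
    obtain ⟨A, hA, a, ha, rfl⟩ := hB
    obtain ⟨hA𝒜, hAk⟩ := mem_filter.1 hA
    refine ⟨by rw [card_insert_of_notMem ha, hAk], A, hA𝒜, subset_insert _ _, ?_⟩
    intro h
    exact ha (h ▸ mem_insert_self a A)
  have hdisj : Disjoint 𝒜p (∂⁺ 𝒮) := by
    rw [disjoint_right]
    intro B hB hB'
    obtain ⟨hBc, A, hA𝒜, hAB, hABne⟩ := hsh B hB
    exact hanti (mem_coe.2 hA𝒜) (mem_coe.2 (mem_filter.1 hB').1) hABne hAB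
  have hfree : ∀ A ∈ 𝒮, Aᶜ ∉ 𝒮 := by
    intro A hA hA'
    have := hint A (mem_filter.1 hA).1 Aᶜ (mem_filter.1 hA').1
    rw [inter_compl] at this
    exact not_nonempty_empty this
  have hcard𝒮 : #𝒮 ≤ #(∂⁺ 𝒮) := by
    by_cases hk0 : k = 0
    · have : 𝒮 = ∅ := by
        rw [eq_empty_iff_forall_notMem]
        intro A hA
        obtain ⟨hA𝒜, hAk⟩ := mem_filter.1 hA
        have := hint A hA𝒜 A hA𝒜
        rw [inter_self] at this
        rw [hk0, card_eq_zero] at hAk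
        subst hAk
        exact not_nonempty_empty this
      simp [this]
    · exact up_card hk hk0 𝒮 (fun A hA => (mem_filter.1 hA).2) hfree
  refine ⟨𝒜p ∪ ∂⁺ 𝒮, ?_, ?_, ?_, ?_⟩
  · -- antichain
    intro X hX Y hY hne hXY
    rw [coe_union, Set.mem_union] at hX hY
    have hXY' : X ⊆ Y := hXY
    rcases hX with hX | hX <;> rcases hY with hY | hY
    · exact hanti (mem_coe.2 (mem_filter.1 hX).1) (mem_coe.2 (mem_filter.1 hY).1) hne hXY'
    · -- X ∈ 𝒜p, Y ∈ ∂⁺𝒮 : X ⊆ Y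
      obtain ⟨hYc, A, hA𝒜, hAY, hAYne⟩ := hsh Y hY
      have hXc : k + 1 ≤ #X := by
        have h1 := hmin X (mem_filter.1 hX).1
        have h2 := (mem_filter.1 hX).2
        omega
      have : X = Y := eq_of_subset_of_card_le hXY' (by
        have := card_le_card hXY'
        omega)
      exact hne this
    · -- X ∈ ∂⁺𝒮, Y ∈ 𝒜p
      obtain ⟨hXc, A, hA𝒜, hAX, hAXne⟩ := hsh X hX
      have hAY : A ⊆ Y := hAX.trans hXY'
      have hAYne : A ≠ Y := by
        rintro rfl
        exact hne (Finset.Subset.antisymm hXY' hAX)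
      exact hanti (mem_coe.2 hA𝒜) (mem_coe.2 (mem_filter.1 hY).1) hAYne hAY
    · obtain ⟨hXc, _⟩ := hsh X hX
      obtain ⟨hYc, _⟩ := hsh Y hY
      exact hne (eq_of_subset_of_card_le hXY' (by omega))
  · -- intersecting
    have hcover : ∀ X ∈ 𝒜p ∪ ∂⁺ 𝒮, ∃ A ∈ 𝒜, A ⊆ X := by
      intro X hX
      rcases mem_union.1 hX with hX | hX
      · exact ⟨X, (mem_filter.1 hX).1, Finset.Subset.refl X⟩
      · obtain ⟨_, A, hA, hAX, _⟩ := hsh X hX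
        exact ⟨A, hA, hAX⟩
    intro X hX Y hY
    obtain ⟨A, hA𝒜, hAX⟩ := hcover X hX
    obtain ⟨B, hB𝒜, hBY⟩ := hcover Y hY
    exact (hint A hA𝒜 B hB𝒜).mono (inter_subset_inter hAX hBY)
  · -- sizes
    intro A hA
    rcases mem_union.1 hA with hA | hA
    · have h1 := hmin A (mem_filter.1 hA).1
      have h2 := (mem_filter.1 hA).2
      omega
    · exact (hsh A hA).1.ge
  · -- cards
    have hsplit : #𝒮 + #𝒜p = #𝒜 :=
      card_filter_add_card_filter_not (p := fun A => #A = k)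
    rw [card_union_of_disjoint hdisj]
    omega

lemma step_down {N : ℕ} (T e : ℕ) (hT : N < 2 * T) (hT1 : 1 ≤ T)
    (𝒜 : Finset (Finset (Fin N)))
    (hanti : IsAntichain (· ⊆ ·) (𝒜 : Set (Finset (Fin N))))
    (hbnd : ∀ A ∈ 𝒜, T ≤ #A ∧ #A ≤ T + e + 1) :
    ∃ 𝒜' : Finset (Finset (Fin N)),
      IsAntichain (· ⊆ ·) (𝒜' : Set (Finset (Fin N))) ∧
      (∀ A ∈ 𝒜', T ≤ #A ∧ #A ≤ T + e) ∧ #𝒜 ≤ #𝒜' := by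
  classical
  set l := T + e + 1 with hl
  set 𝒮 := 𝒜.filter (fun A => #A = l) with h𝒮
  set 𝒜m := 𝒜.filter (fun A => ¬ #A = l) with h𝒜m
  have hsh : ∀ B ∈ ∂ 𝒮, #B = l - 1 ∧ ∃ A ∈ 𝒜, B ⊆ A ∧ B ≠ A := by
    intro B hB
    rw [mem_shadow_iff] at hB
    obtain ⟨A, hA, a, ha, rfl⟩ := hB
    obtain ⟨hA𝒜, hAl⟩ := mem_filter.1 hA
    refine ⟨by rw [card_erase_of_mem ha, hAl], A, hA𝒜, erase_subset _ _, ?_⟩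
    intro h
    have : a ∈ A.erase a := by rw [h]; exact ha
    exact (notMem_erase a A) this
  have hdisj : Disjoint 𝒜m (∂ 𝒮) := by
    rw [disjoint_right]
    intro B hB hB'
    obtain ⟨hBc, A, hA𝒜, hBA, hBAne⟩ := hsh B hB
    exact hanti (mem_coe.2 (mem_filter.1 hB').1) (mem_coe.2 hA𝒜) hBAne hBA
  have hcard𝒮 : #𝒮 ≤ #(∂ 𝒮) := by
    have hsized : ((𝒮 : Finset (Finset (Fin N))) : Set (Finset (Fin N))).Sized l :=
      fun A hA => (mem_filter.1 hA).2
    have hlym := card_mul_le_card_shadow_mul hsized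
    rw [Fintype.card_fin] at hlym
    have h1 : #(∂ 𝒮) * (N - l + 1) ≤ #(∂ 𝒮) * l := Nat.mul_le_mul_left _ (by omega)
    have := le_trans hlym h1
    exact Nat.le_of_mul_le_mul_right this (by omega)
  refine ⟨𝒜m ∪ ∂ 𝒮, ?_, ?_, ?_⟩
  · intro X hX Y hY hne hXY
    rw [coe_union, Set.mem_union] at hX hY
    have hXY' : X ⊆ Y := hXY
    rcases hX with hX | hX <;> rcases hY with hY | hY
    · exact hanti (mem_coe.2 (mem_filter.1 hX).1) (mem_coe.2 (mem_filter.1 hY).1) hne hXY'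
    · -- X ∈ 𝒜m, Y ∈ ∂𝒮
      obtain ⟨hYc, A, hA𝒜, hYA, hYAne⟩ := hsh Y hY
      have hXA : X ⊆ A := hXY'.trans hYA
      have hXAne : X ≠ A := by
        rintro rfl
        exact hne (Finset.Subset.antisymm hXY' hYA)
      exact hanti (mem_coe.2 (mem_filter.1 hX).1) (mem_coe.2 hA𝒜) hXAne hXA
    · -- X ∈ ∂𝒮, Y ∈ 𝒜m
      obtain ⟨hXc, A, hA𝒜, hXA, hXAne⟩ := hsh X hX
      have hYbnd := hbnd Y (mem_filter.1 hY).1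
      have hYl := (mem_filter.1 hY).2
      have : #Y ≤ #X := by omega
      have := eq_of_subset_of_card_le hXY' (by omega)
      exact hne this
    · obtain ⟨hXc, _⟩ := hsh X hX
      obtain ⟨hYc, _⟩ := hsh Y hY
      exact hne (eq_of_subset_of_card_le hXY' (by omega))
  · intro A hA
    rcases mem_union.1 hA with hA | hA
    · have h1 := hbnd A (mem_filter.1 hA).1
      have h2 := (mem_filter.1 hA).2
      omega
    · have := (hsh A hA).1
      omega
  · have hsplit : #𝒮 + #𝒜m = #𝒜 :=
      card_filter_add_card_filter_not (p := fun A => #A = l)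
    rw [card_union_of_disjoint hdisj]
    omega

lemma down_phase {N : ℕ} : ∀ e (𝒜 : Finset (Finset (Fin N))),
    IsAntichain (· ⊆ ·) (𝒜 : Set (Finset (Fin N))) →
    (∀ A ∈ 𝒜, N / 2 + 1 ≤ #A ∧ #A ≤ N / 2 + 1 + e) →
    (#𝒜) ≤ N.choose (N / 2 + 1) := by
  intro e
  induction e with
  | zero =>
    intro 𝒜 hanti hbnd
    have hsub : 𝒜 ⊆ (univ : Finset (Fin N)).powersetCard (N / 2 + 1) := by
      intro A hA
      refine mem_powersetCard.2 ⟨subset_univ _, ?_⟩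
      have := hbnd A hA
      omega
    calc #𝒜 ≤ #((univ : Finset (Fin N)).powersetCard (N / 2 + 1)) := card_le_card hsub
    _ = N.choose (N / 2 + 1) := by rw [card_powersetCard, card_univ, Fintype.card_fin]
  | succ e ih =>
    intro 𝒜 hanti hbnd
    obtain ⟨𝒜', hanti', hbnd', hcard⟩ :=
      step_down (N / 2 + 1) e (by omega) (by omega) 𝒜 hanti (fun A hA => by
        have := hbnd A hA; omega)
    exact hcard.trans (ih 𝒜' hanti' hbnd')

lemma up_phase {N : ℕ} : ∀ d (𝒜 : Finset (Finset (Fin N))),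
    IsAntichain (· ⊆ ·) (𝒜 : Set (Finset (Fin N))) →
    (∀ A ∈ 𝒜, ∀ B ∈ 𝒜, (A ∩ B).Nonempty) →
    (∀ A ∈ 𝒜, N / 2 + 1 ≤ #A + d) →
    (#𝒜) ≤ N.choose (N / 2 + 1) := by
  intro d
  induction d with
  | zero =>
    intro 𝒜 hanti hint hsz
    refine down_phase N 𝒜 hanti (fun A hA => ?_)
    have h1 := hsz A hA
    have h2 : #A ≤ N := by
      have := card_le_univ A
      rwa [Fintype.card_fin] at this
    omega
  | succ d ih =>
    intro 𝒜 hanti hint hsz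
    obtain ⟨𝒜', hanti', hint', hsz', hcard⟩ :=
      step_up (N / 2 - d) (by omega) 𝒜 hanti hint (fun A hA => by
        have := hsz A hA; omega)
    refine hcard.trans (ih 𝒜' hanti' hint' (fun A hA => ?_))
    have := hsz' A hA
    omega

lemma milner_fin (N : ℕ) (𝒜 : Finset (Finset (Fin N)))
    (hanti : IsAntichain (· ⊆ ·) (𝒜 : Set (Finset (Fin N))))
    (hint : ∀ A ∈ 𝒜, ∀ B ∈ 𝒜, (A ∩ B).Nonempty) :
    (#𝒜) ≤ N.choose (N / 2 + 1) :=
  up_phase (N / 2 + 1) 𝒜 hanti hint (fun A hA => by omega)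

/-- for `m ≥ 4` the degree of any `m × n` binary 2-covering array satisfies
`n ≤ (m-1).choose (m/2 - 1)`, i.e. `CAN̄(2,m,2) ≤ (m-1).choose (m/2 - 1)`. -/
theorem max_degree_upper_bound (m n : ℕ) (hm : 4 ≤ m) (C : Fin m → Fin n → Fin 2)
    (hC : IsCoveringArray m n 2 2 C) :
    n ≤ (m-1).choose (m/2 - 1) := by
  classical
  by_cases hn : n ≤ 1
  · have hpos : 0 < (m - 1).choose (m / 2 - 1) := Nat.choose_pos (by omega)
    omega
  push_neg at hn
  set N := m - 1 with hN
  have hρlt : ∀ s : Fin N, (s : ℕ) + 1 < m := fun s => by have := s.isLt; omega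
  set ρ : Fin N → Fin m := fun s => ⟨s.1 + 1, hρlt s⟩ with hρdef
  have hz0 : 0 < m := by omega
  set z : Fin m := ⟨0, hz0⟩ with hzdef
  set u : Fin n → Finset (Fin N) :=
    fun i => univ.filter (fun s => C (ρ s) i ≠ C z i) with hu
  have hflip : ∀ a : Fin 2, (if a = 0 then (1 : Fin 2) else 0) ≠ a := by decide
  have hpair : ∀ i j : Fin n, i ≠ j → ∀ a b : Fin 2,
      ∃ r : Fin m, C r i = a ∧ C r j = b := by
    intro i j hij a b
    obtain ⟨r, hr⟩ := hC ![i, j] (by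
      intro x y hxy
      fin_cases x <;> fin_cases y <;> simp_all <;> exact absurd hxy hij) ![a, b]
    have h0 := hr 0
    have h1 := hr 1
    simp only [Matrix.cons_val_zero, Matrix.cons_val_one, Matrix.head_cons] at h0 h1
    exact ⟨r, h0, h1⟩
  have hrow : ∀ r : Fin m, r ≠ z → ∃ s : Fin N, ρ s = r := by
    intro r hr
    have hr0 : (r : ℕ) ≠ 0 := fun h => hr (Fin.ext h)
    refine ⟨⟨r.1 - 1, by have := r.isLt; omega⟩, Fin.ext ?_⟩
    simp only [hρdef]
    omega
  have hF1 : ∀ i j : Fin n, i ≠ j → ∃ s : Fin N, s ∈ u i ∧ s ∉ u j := by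
    intro i j hij
    obtain ⟨r, hr0, hr1⟩ := hpair i j hij (if C z i = 0 then 1 else 0) (C z j)
    have hrne : C r i ≠ C z i := by rw [hr0]; exact hflip _
    have hrz : r ≠ z := fun h => hrne (by rw [h])
    obtain ⟨s, rfl⟩ := hrow r hrz
    refine ⟨s, mem_filter.2 ⟨mem_univ _, hrne⟩, ?_⟩
    intro hmem
    exact (mem_filter.1 hmem).2 hr1
  have hF2 : ∀ i j : Fin n, i ≠ j → ∃ s : Fin N, s ∈ u i ∧ s ∈ u j := by
    intro i j hij
    obtain ⟨r, hr0, hr1⟩ := hpair i j hij (if C z i = 0 then 1 else 0)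
      (if C z j = 0 then 1 else 0)
    have hrnei : C r i ≠ C z i := by rw [hr0]; exact hflip _
    have hrnej : C r j ≠ C z j := by rw [hr1]; exact hflip _
    have hrz : r ≠ z := fun h => hrnei (by rw [h])
    obtain ⟨s, rfl⟩ := hrow r hrz
    exact ⟨s, mem_filter.2 ⟨mem_univ _, hrnei⟩, mem_filter.2 ⟨mem_univ _, hrnej⟩⟩
  have huinj : Function.Injective u := by
    intro i j h
    by_contra hne
    obtain ⟨s, hsi, hsj⟩ := hF1 i j hne
    rw [h] at hsi
    exact hsj hsi
  have hanti : IsAntichain (· ⊆ ·) (((univ : Finset (Fin n)).image u : Finset (Finset (Fin N))) : Set (Finset (Fin N))) := by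
    intro X hX Y hY hne hsub
    rw [coe_image, Set.mem_image] at hX hY
    obtain ⟨i, -, rfl⟩ := hX
    obtain ⟨j, -, rfl⟩ := hY
    have hij : i ≠ j := fun h => hne (by rw [h])
    obtain ⟨s, hsi, hsj⟩ := hF1 i j hij
    exact hsj (hsub hsi)
  have hint : ∀ X ∈ (univ : Finset (Fin n)).image u, ∀ Y ∈ (univ : Finset (Fin n)).image u,
      (X ∩ Y).Nonempty := by
    intro X hX Y hY
    obtain ⟨i, -, rfl⟩ := mem_image.1 hX
    obtain ⟨j, -, rfl⟩ := mem_image.1 hY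
    by_cases hij : i = j
    · subst hij
      rw [inter_self]
      have hcard : 1 < Fintype.card (Fin n) := by simpa using hn
      obtain ⟨j', hj'⟩ := Fintype.exists_ne_of_one_lt_card hcard i
      obtain ⟨s, hs, -⟩ := hF2 i j' (fun h => hj' h.symm)
      exact ⟨s, hs⟩
    · obtain ⟨s, hs1, hs2⟩ := hF2 i j hij
      exact ⟨s, mem_inter.2 ⟨hs1, hs2⟩⟩
  have hmil := milner_fin N ((univ : Finset (Fin n)).image u) hanti hint
  rw [card_image_of_injective _ huinj, card_univ, Fintype.card_fin] at hmil
  have hsymm : (m - 1).choose ((m - 1) - ((m - 1) / 2 + 1)) = (m - 1).choose ((m - 1) / 2 + 1) :=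
    Nat.choose_symm (by omega)
  have h2 : (m - 1) - ((m - 1) / 2 + 1) = m / 2 - 1 := by omega
  rw [h2] at hsymm
  calc n ≤ N.choose (N / 2 + 1) := hmil
  _ = (m - 1).choose ((m - 1) / 2 + 1) := rfl
  _ = (m - 1).choose (m / 2 - 1) := hsymm.symm
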